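/- Let X be the vertex tree-shift determined by n×n 0-1 matrices A_0 and A_1 whose graph representation is essential. If X is irreducible, then A_0 and A_1 are both irreducible matrices. -/
import Mathlib


/-!  Tree-shifts on the binary tree: basic definitions. -/

/-- An infinite tree over alphabet `A`: a labeling of all finite words over
`Σ = {0,1}` (encoded as `List Bool`). -/
abbrev InfTree (A : Type*) : Type _ := List Bool → A

/-- The shift map `σ_w`: `(σ_w t)_x = t_{wx}`. -/
def treeShift {A : Type*} (w : List Bool) (t : InfTree A) : InfTree A :=
  fun x => t (w ++ x)

/-- A pattern: a labeling of a finite prefix-closed set of words. -/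
structure TreePattern (A : Type*) where
  supp : Finset (List Bool)
  prefixClosed : ∀ x ∈ supp, ∀ y : List Bool, y <+: x → y ∈ supp
  label : (x : List Bool) → x ∈ supp → A

/-- The pattern `p` occurs in the tree `t` rooted at the node `x`. -/
def TreePattern.occursAt {A : Type*} (p : TreePattern A) (t : InfTree A) (x : List Bool) : Prop :=
  ∀ y (hy : y ∈ p.supp), p.label y hy = t (x ++ y)

/-- The tree-shift `X_F` defined by a set `F` of forbidden patterns. -/
def treeShiftOf {A : Type*} (F : Set (TreePattern A)) : Set (InfTree A) :=
  { t | ∀ p ∈ F, ∀ x : List Bool, ¬ p.occursAt t x }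

/-- A subset of trees is a tree-shift if it is `X_F` for some forbidden set `F`. -/
def IsTreeShift {A : Type*} (X : Set (InfTree A)) : Prop :=
  ∃ F : Set (TreePattern A), X = treeShiftOf F

/-- A tree-shift of finite type: `X_F` for some finite forbidden set `F`. -/
def IsTSFT {A : Type*} (X : Set (InfTree A)) : Prop :=
  ∃ F : Set (TreePattern A), F.Finite ∧ X = treeShiftOf F

/-- A Markov tree-shift: `X_F` for a finite forbidden set `F` consisting of 2-blocks,
i.e. patterns with support `Σ_1 = {ε, 0, 1}`. -/
def IsMarkovTS {A : Type*} (X : Set (InfTree A)) : Prop :=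
  ∃ F : Set (TreePattern A), F.Finite ∧
    (∀ p ∈ F, p.supp = ({[], [false], [true]} : Finset (List Bool))) ∧
    X = treeShiftOf F

/-- The `n`-block of `t` rooted at `x` equals `u`; an `n`-block is recorded as a function
on all words, only its values on words of length `< n` (i.e. on `Σ_{n-1}`) are relevant. -/
def blockEqAt {A : Type*} (t : InfTree A) (x : List Bool) (n : ℕ) (u : List Bool → A) : Prop :=
  ∀ y : List Bool, y.length < n → t (x ++ y) = u y

/-- `u ∈ B_n(X)` : the `n`-block `u` appears in some tree of `X`. -/
def memBlocks {A : Type*} (X : Set (InfTree A)) (n : ℕ) (u : List Bool → A) : Prop :=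
  ∃ t ∈ X, ∃ x : List Bool, blockEqAt t x n u

/-- The maximal length `|P|` of a word in a finite set of words `P`. -/
def maxLen (P : Finset (List Bool)) : ℕ := P.sup List.length

/-- `P` is a complete prefix set (CPS): it is a prefix set (no word of `P` is a prefix of
another word of `P`) and every word of length at least `|P|` has a prefix in `P`. -/
def IsCPS (P : Finset (List Bool)) : Prop :=
  (∀ p ∈ P, ∀ q ∈ P, p <+: q → p = q) ∧
  (∀ x : List Bool, maxLen P ≤ x.length → ∃ p ∈ P, p <+: x)

/-- Irreducibility of a tree-shift: any two `n`-blocks `u, v` of `X` can be realized in a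
single tree of `X`, with `u` rooted at `ε` and `v` rooted at every word of a CPS whose
words have length at least `n`. -/
def IrreducibleTS {A : Type*} (X : Set (InfTree A)) : Prop :=
  ∀ n : ℕ, 0 < n → ∀ u v : List Bool → A, memBlocks X n u → memBlocks X n v →
    ∃ t ∈ X, ∃ P : Finset (List Bool), IsCPS P ∧ (∀ x ∈ P, n ≤ x.length) ∧
      blockEqAt t [] n u ∧ ∀ x ∈ P, blockEqAt t x n v

/-- Mixing for tree-shifts: there are two CPS `P_0, P_1` connecting any two blocks, the
choice of the CPS being governed by the last letter `w_{n-1}` of `w ∈ Σ^{n-1}`. -/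
def MixingTS {A : Type*} (X : Set (InfTree A)) : Prop :=
  ∃ P0 P1 : Finset (List Bool), IsCPS P0 ∧ IsCPS P1 ∧
    ∀ n m : ℕ, 0 < n → 0 < m → ∀ u v : List Bool → A,
      memBlocks X n u → memBlocks X m v →
      ∃ t ∈ X, blockEqAt t [] n u ∧
        ∀ w : List Bool, w.length = n - 1 → ∀ b : Bool, w.getLast? = some b →
          ∀ x ∈ (if b then P1 else P0), blockEqAt t (w ++ x) m v

/-- A periodic tree: `σ_x t = t` for all `x` in some complete prefix set. -/
def IsPeriodicTree {A : Type*} (t : InfTree A) : Prop :=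
  ∃ P : Finset (List Bool), IsCPS P ∧ ∀ x ∈ P, treeShift x t = t

/-- The metric on trees: `d(t,t') = 2^{-n}` where `n` is the least length of a
disagreement, and `d(t,t') = 0` if `t = t'`. -/
noncomputable def treeDist {A : Type*} (t t' : InfTree A) : ℝ :=
  haveI := Classical.propDecidable (t = t')
  if t = t' then 0
  else (2⁻¹ : ℝ) ^ sInf { n : ℕ | ∃ x : List Bool, x.length = n ∧ t x ≠ t' x }

/-- `U` is an open subset of `X` in the topology induced by the metric `treeDist`. -/
def IsOpenIn {A : Type*} (X U : Set (InfTree A)) : Prop :=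
  U ⊆ X ∧ ∀ t ∈ U, ∃ ε : ℝ, 0 < ε ∧ ∀ t' ∈ X, treeDist t t' < ε → t' ∈ U

/-- The `m`-block of `t` rooted at `x`, as a function on `Σ_{m-1}`. -/
def blockFun {A : Type*} (m : ℕ) (t : InfTree A) (x : List Bool) :
    { y : List Bool // y.length < m } → A :=
  fun y => t (x ++ y.1)

/-- `φ` is a sliding block code on `X`: it is induced by a local `m`-block map `Φ`. -/
def IsSlidingBlockCode {A B : Type*} (X : Set (InfTree A)) (φ : InfTree A → InfTree B) : Prop :=
  ∃ m : ℕ, 0 < m ∧ ∃ Φ : ({ y : List Bool // y.length < m } → A) → B,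
    ∀ t ∈ X, ∀ x : List Bool, φ t x = Φ (blockFun m t x)

/-- `φ` is a conjugacy from `X` onto `Y`: an invertible sliding block code whose inverse
is also a sliding block code. -/
def IsConjugacy {A B : Type*} (X : Set (InfTree A)) (Y : Set (InfTree B))
    (φ : InfTree A → InfTree B) : Prop :=
  IsSlidingBlockCode X φ ∧ Set.MapsTo φ X Y ∧
    ∃ ψ : InfTree B → InfTree A, IsSlidingBlockCode Y ψ ∧ Set.MapsTo ψ Y X ∧
      (∀ t ∈ X, ψ (φ t) = t) ∧ (∀ s ∈ Y, φ (ψ s) = s)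

/-- The `m`-th higher block code `φ_m`, sending `t` to the tree of `m`-blocks of `t`. -/
def higherBlockMap {A : Type*} (m : ℕ) (t : InfTree A) :
    InfTree ({ y : List Bool // y.length < m } → A) :=
  fun x => blockFun m t x

/-- The vertex tree-shift determined by two transition matrices `A_0, A_1`. -/
def vertexTreeShift {n : ℕ} (A0 A1 : Matrix (Fin n) (Fin n) ℕ) : Set (InfTree (Fin n)) :=
  { t | ∀ x : List Bool,
      A0 (t x) (t (x ++ [false])) = 1 ∧ A1 (t x) (t (x ++ [true])) = 1 }

/-- `A_x = A_{x_l} A_{x_{l-1}} ⋯ A_{x_1}` for a word `x = x_1 … x_l`. -/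
def matWord {n : ℕ} (A0 A1 : Matrix (Fin n) (Fin n) ℕ) :
    List Bool → Matrix (Fin n) (Fin n) ℕ
  | [] => 1
  | b :: rest => matWord A0 A1 rest * (if b then A1 else A0)

/-- A 0-1 matrix. -/
def ZeroOne {n : ℕ} (M : Matrix (Fin n) (Fin n) ℕ) : Prop := ∀ i j, M i j ≤ 1

/-- The graph representation of the pair `(A_0, A_1)` is essential: every row and every
column of each matrix contains a nonzero entry. -/
def EssentialPair {n : ℕ} (A0 A1 : Matrix (Fin n) (Fin n) ℕ) : Prop :=
  (∀ i, ∃ j, 0 < A0 i j) ∧ (∀ j, ∃ i, 0 < A0 i j) ∧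
  (∀ i, ∃ j, 0 < A1 i j) ∧ (∀ j, ∃ i, 0 < A1 i j)

/-- An irreducible nonnegative matrix. -/
def MatIrreducible {n : ℕ} (A : Matrix (Fin n) (Fin n) ℕ) : Prop :=
  ∀ i j, ∃ k : ℕ, 1 ≤ k ∧ 0 < (A ^ k) i j

/-- A primitive nonnegative matrix. -/
def MatPrimitive {n : ℕ} (A : Matrix (Fin n) (Fin n) ℕ) : Prop :=
  ∃ k : ℕ, 1 ≤ k ∧ ∀ i j, 0 < (A ^ k) i j

/-- `V_w`: the set of possible terminal states of the labeled path `w`. -/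
def Vset {n : ℕ} (M : Matrix (Fin n) (Fin n) ℕ) : Set (Fin n) := { j | ∃ i, 0 < M i j }

/-- A cycle: a word `w = w_1 … w_k` with `k ≥ 2`, `w_k = w_1` and `V_w = V_{w_1}`. -/
def IsCycle {n : ℕ} (A0 A1 : Matrix (Fin n) (Fin n) ℕ) (w : List Bool) : Prop :=
  2 ≤ w.length ∧ w.getLast? = w.head? ∧
    Vset (matWord A0 A1 w) = Vset (matWord A0 A1 (w.take 1))

private def follow {n : ℕ} (f0 f1 : Fin n → Fin n) : List Bool → Fin n → Fin n
  | [], i => i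
  | b :: rest, i => follow f0 f1 rest ((if b then f1 else f0) i)

private lemma follow_append {n : ℕ} (f0 f1 : Fin n → Fin n) (x : List Bool) (b : Bool)
    (i : Fin n) :
    follow f0 f1 (x ++ [b]) i = (if b then f1 else f0) (follow f0 f1 x i) := by
  induction x generalizing i with
  | nil => rfl
  | cons c rest ih => simp [follow, ih]

private lemma exists_tree_root {n : ℕ} (A0 A1 : Matrix (Fin n) (Fin n) ℕ)
    (h0 : ZeroOne A0) (h1 : ZeroOne A1) (hess : EssentialPair A0 A1) (i : Fin n) :
    ∃ t ∈ vertexTreeShift A0 A1, t [] = i := by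
  obtain ⟨hr0, _, hr1, _⟩ := hess
  choose f0 hf0 using hr0
  choose f1 hf1 using hr1
  refine ⟨fun x => follow f0 f1 x i, fun x => ?_, rfl⟩
  constructor
  · show A0 (follow f0 f1 x i) (follow f0 f1 (x ++ [false]) i) = 1
    rw [follow_append]
    simpa using le_antisymm (h0 _ _) (hf0 _)
  · show A1 (follow f0 f1 x i) (follow f0 f1 (x ++ [true]) i) = 1
    rw [follow_append]
    simpa using le_antisymm (h1 _ _) (hf1 _)

private lemma pow_pos_of_path {n : ℕ} (A0 A1 : Matrix (Fin n) (Fin n) ℕ) (b : Bool)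
    (t : InfTree (Fin n)) (ht : t ∈ vertexTreeShift A0 A1) (x : List Bool) (k : ℕ) :
    0 < ((if b then A1 else A0) ^ k) (t x) (t (x ++ List.replicate k b)) := by
  induction k with
  | zero => simp [Matrix.one_apply]
  | succ k ih =>
    have hstep : (if b then A1 else A0) (t (x ++ List.replicate k b))
        (t ((x ++ List.replicate k b) ++ [b])) = 1 := by
      cases b
      · simpa using (ht (x ++ List.replicate k false)).1
      · simpa using (ht (x ++ List.replicate k true)).2
    have harg : x ++ List.replicate (k + 1) b = (x ++ List.replicate k b) ++ [b] := by
      rw [List.replicate_succ', List.append_assoc]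
    rw [pow_succ, harg, Matrix.mul_apply]
    have hterm : 0 < ((if b then A1 else A0) ^ k) (t x) (t (x ++ List.replicate k b)) *
        (if b then A1 else A0) (t (x ++ List.replicate k b))
          (t ((x ++ List.replicate k b) ++ [b])) :=
      Nat.mul_pos ih (by rw [hstep]; norm_num)
    exact lt_of_lt_of_le hterm (Finset.single_le_sum
      (f := fun m => ((if b then A1 else A0) ^ k) (t x) m *
        (if b then A1 else A0) m (t (x ++ List.replicate k b ++ [b])))
      (fun m _ => Nat.zero_le _) (Finset.mem_univ _))

private lemma mat_irr_aux {n : ℕ} (A0 A1 : Matrix (Fin n) (Fin n) ℕ)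
    (h0 : ZeroOne A0) (h1 : ZeroOne A1) (hess : EssentialPair A0 A1)
    (hirr : IrreducibleTS (vertexTreeShift A0 A1)) (b : Bool) :
    MatIrreducible (if b then A1 else A0) := by
  intro i j
  obtain ⟨ti, hti, htie⟩ := exists_tree_root A0 A1 h0 h1 hess i
  obtain ⟨tj, htj, htje⟩ := exists_tree_root A0 A1 h0 h1 hess j
  have hu : memBlocks (vertexTreeShift A0 A1) 1 (fun _ => i) := by
    refine ⟨ti, hti, [], fun y hy => ?_⟩
    have : y = [] := List.eq_nil_of_length_eq_zero (Nat.lt_one_iff.mp hy)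
    simp [this, htie]
  have hv : memBlocks (vertexTreeShift A0 A1) 1 (fun _ => j) := by
    refine ⟨tj, htj, [], fun y hy => ?_⟩
    have : y = [] := List.eq_nil_of_length_eq_zero (Nat.lt_one_iff.mp hy)
    simp [this, htje]
  obtain ⟨t, htX, P, hCPS, hlen, hbu, hbv⟩ := hirr 1 one_pos _ _ hu hv
  obtain ⟨p, hpP, hpre⟩ := hCPS.2 (List.replicate (maxLen P) b) (by simp)
  have hpall : ∀ c ∈ p, c = b := by
    obtain ⟨s, hs⟩ := hpre
    intro c hc
    exact List.eq_of_mem_replicate (hs ▸ List.mem_append_left s hc)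
  have hp : p = List.replicate p.length b := List.eq_replicate_of_mem hpall
  have ht0 : t [] = i := by simpa using hbu [] (by simp)
  have htp : t p = j := by simpa using hbv p hpP [] (by simp)
  refine ⟨p.length, hlen p hpP, ?_⟩
  have := pow_pos_of_path A0 A1 b t htX [] p.length
  rw [ht0] at this
  rwa [List.nil_append, ← hp, htp] at this

/-- if an essential vertex tree-shift is irreducible, then both of its
transition matrices are irreducible. -/
theorem matrices_irreducible_of_irreducible_vertexTreeShift {n : ℕ}
    (A0 A1 : Matrix (Fin n) (Fin n) ℕ) (h0 : ZeroOne A0) (h1 : ZeroOne A1)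
    (hess : EssentialPair A0 A1) (hirr : IrreducibleTS (vertexTreeShift A0 A1)) :
    MatIrreducible A0 ∧ MatIrreducible A1 := by
  have hf := mat_irr_aux A0 A1 h0 h1 hess hirr false
  have ht := mat_irr_aux A0 A1 h0 h1 hess hirr true
  simp only [if_true, if_false, Bool.false_eq_true] at hf ht
  exact ⟨hf, ht⟩
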